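/- Let s,x,y,t be complex numbers with sy + xt + 1 = x^2 + y^2. Suppose F_1,...,F_6 and G_1,...,G_6 are complex numbers (indexed by unordered pairs from {R,G,B}: 1=RR, 2=RG, 3=RB, 4=GG, 5=GB, 6=BB) satisfying F_4 = F_1 + sF_2 + xF_3, F_5 = xF_2 + yF_3, F_6 = F_1 + yF_2 + tF_3, and the same relations for G. Define H_{uv} = F_{uR}G_{vR} + F_{uG}G_{vG} + F_{uB}G_{vB} for u,v in {R,G,B}. Then H_{RG} = H_{GR} (and symmetrically H_{uv} = H_{vu} for all u,v). -/
import Mathlib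


theorem stmt_4 (s x y t : ℂ) (hst : s*y + x*t + 1 = x^2 + y^2)
    (F1 F2 F3 F4 F5 F6 G1 G2 G3 G4 G5 G6 : ℂ)
    (hF4 : F4 = F1 + s*F2 + x*F3) (hF5 : F5 = x*F2 + y*F3) (hF6 : F6 = F1 + y*F2 + t*F3)
    (hG4 : G4 = G1 + s*G2 + x*G3) (hG5 : G5 = x*G2 + y*G3) (hG6 : G6 = G1 + y*G2 + t*G3) :
    -- H_{RG} = H_{GR}
    (F1*G2 + F2*G4 + F3*G5 = F2*G1 + F4*G2 + F5*G3) ∧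
    -- H_{RB} = H_{BR}
    (F1*G3 + F2*G5 + F3*G6 = F3*G1 + F5*G2 + F6*G3) ∧
    -- H_{GB} = H_{BG}
    (F2*G3 + F4*G5 + F5*G6 = F3*G2 + F5*G4 + F6*G5) := by
  subst hF4 hF5 hF6 hG4 hG5 hG6
  refine ⟨by ring, by ring, by linear_combination (F2*G3 - F3*G2) * hst⟩
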